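/- Let λ ∈ (2^{−1/(2d)}, 1) and suppose that the finite-sum set {Σ_{j=0}^m a_j λ^{−d j} : m ∈ ℕ, a_j ∈ {0,1}} is ε'-dense in [C_1, ∞) for every ε' > 0 (for some C_1 = C_1(ε') > 0). Then for every ε > 0 there exists C > 0 such that the set Z^d(λ) = {(1−λ) Σ_{j=1}^m e_{a_j} λ^{−j} : m ∈ ℕ, (a_j) ∈ {0,1,...,d}^m} is ε-dense in the region ⋂_{i=1}^d {x ∈ ℝ^d : x_i ≥ C}. -/

import Mathlib

theorem sum_range_mul_aux (d : ℕ) (f : ℕ → ℝ) (n : ℕ) :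
    ∑ j ∈ Finset.range (d * n), f j
      = ∑ k ∈ Finset.range n, ∑ r ∈ Finset.range d, f (d * k + r) := by
  induction n with
  | zero => simp
  | succ n ih =>
    rw [Finset.sum_range_succ, ← ih, Nat.mul_succ, Finset.sum_range_add]

/-- let `λ ∈ (2^{-1/(2d)}, 1)` and assume the one-dimensional finite-sum set
`{Σ_{j=0}^m a_j λ^{-dj} : a_j ∈ {0,1}}` is `ε'`-dense in `[C₁, ∞)` for every `ε' > 0`
(for some `C₁ = C₁(ε')`).  Then for every `ε > 0` there is `C > 0` such that
`Z^d(λ)` is `ε`-dense in `⋂ᵢ {x : xᵢ ≥ C}`. -/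
theorem Z_d_lambda_dense (d : ℕ) (hd : 1 ≤ d) (lam : ℝ)
    (hlam : lam ∈ Set.Ioo ((2 : ℝ) ^ (-(1 / (2 * (d : ℝ))))) 1)
    (e : Fin (d + 1) → EuclideanSpace ℝ (Fin d))
    (he : ∀ i j, e i j = if (i : ℕ) = (j : ℕ) + 1 then 1 else 0)
    (hdense1 : ∀ ε' > (0 : ℝ), ∃ C₁ > (0 : ℝ), ∀ y : ℝ, C₁ ≤ y →
      ∃ m : ℕ, ∃ a : ℕ → ℕ, (∀ j, a j ≤ 1) ∧
        |y - ∑ j ∈ Finset.range (m + 1), (a j : ℝ) * (lam ^ (d * j))⁻¹| ≤ ε') :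
    ∀ ε > (0 : ℝ), ∃ C > (0 : ℝ), ∀ x : EuclideanSpace ℝ (Fin d), (∀ i, C ≤ x i) →
      ∃ m : ℕ, ∃ a : ℕ → Fin (d + 1),
        dist x (∑ j ∈ Finset.range m, ((1 - lam) * (lam ^ (j + 1))⁻¹) • e (a j)) ≤ ε := by
  obtain ⟨hlam0', hlam1⟩ := hlam
  have hlam0 : 0 < lam := lt_trans (by positivity) hlam0'
  have h1lam : 0 < 1 - lam := by linarith
  intro ε hε
  have hd0 : (0:ℝ) < d := by exact_mod_cast hd
  have hsd : (0:ℝ) < Real.sqrt d := Real.sqrt_pos.2 hd0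
  set ε' : ℝ := ε * lam ^ d / ((1 - lam) * Real.sqrt d) with hε'def
  have hε' : 0 < ε' := by positivity
  obtain ⟨C₁, hC₁pos, hC₁⟩ := hdense1 ε' hε'
  refine ⟨C₁ * (1 - lam) * (lam ^ d)⁻¹, by positivity, ?_⟩
  intro x hx
  have hpowle : ∀ q : Fin d, lam ^ d ≤ lam ^ ((q:ℕ) + 1) :=
    fun q => pow_le_pow_of_le_one hlam0.le hlam1.le (Nat.succ_le_of_lt q.2)
  -- one-dimensional approximation for each coordinate
  have key : ∀ q : Fin d, ∃ mq : ℕ, ∃ bq : ℕ → ℕ, (∀ j, bq j ≤ 1) ∧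
      |x q * lam ^ ((q:ℕ) + 1) * (1 - lam)⁻¹
        - ∑ j ∈ Finset.range (mq + 1), (bq j : ℝ) * (lam ^ (d * j))⁻¹| ≤ ε' := by
    intro q
    apply hC₁
    have h1 : 1 ≤ lam ^ ((q:ℕ)+1) * (lam ^ d)⁻¹ := by
      rw [← div_eq_mul_inv, le_div_iff₀ (by positivity)]
      simpa using hpowle q
    have h2 : C₁ * (1 - lam) * (lam ^ d)⁻¹ * (lam ^ ((q:ℕ)+1) * (1 - lam)⁻¹)
        ≤ x q * lam ^ ((q:ℕ)+1) * (1 - lam)⁻¹ := by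
      have := mul_le_mul_of_nonneg_right (hx q) (le_of_lt (by positivity :
        (0:ℝ) < lam ^ ((q:ℕ)+1) * (1 - lam)⁻¹))
      calc C₁ * (1 - lam) * (lam ^ d)⁻¹ * (lam ^ ((q:ℕ)+1) * (1 - lam)⁻¹)
          ≤ x q * (lam ^ ((q:ℕ)+1) * (1 - lam)⁻¹) := this
        _ = x q * lam ^ ((q:ℕ)+1) * (1 - lam)⁻¹ := by ring
    have h3 : C₁ ≤ C₁ * (1 - lam) * (lam ^ d)⁻¹ * (lam ^ ((q:ℕ)+1) * (1 - lam)⁻¹) := by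
      have : C₁ * (1 - lam) * (lam ^ d)⁻¹ * (lam ^ ((q:ℕ)+1) * (1 - lam)⁻¹)
          = C₁ * (lam ^ ((q:ℕ)+1) * (lam ^ d)⁻¹) := by
        field_simp
      rw [this]
      nlinarith [mul_le_mul_of_nonneg_left h1 hC₁pos.le]
    linarith
  choose m b hb hbound using key
  have hdpos : 0 < d := hd
  set M : ℕ := Finset.univ.sup m with hM
  have hmM : ∀ q, m q ≤ M := fun q => Finset.le_sup (Finset.mem_univ q)
  set P : ℕ → Fin d := fun j => ⟨j % d, Nat.mod_lt j hdpos⟩ with hP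
  refine ⟨d * (M + 1), fun j => if m (P j) < j / d ∨ b (P j) (j / d) = 0 then 0
    else (P j).succ, ?_⟩
  set a : ℕ → Fin (d + 1) := fun j => if m (P j) < j / d ∨ b (P j) (j / d) = 0 then 0
    else (P j).succ with ha
  set S := ∑ j ∈ Finset.range (d * (M + 1)), ((1 - lam) * (lam ^ (j + 1))⁻¹) • e (a j)
    with hS
  -- coordinatewise value of S
  have hScoord : ∀ q : Fin d, S q = (1 - lam) * (lam ^ ((q:ℕ) + 1))⁻¹ *
      ∑ k ∈ Finset.range (m q + 1), (b q k : ℝ) * (lam ^ (d * k))⁻¹ := by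
    intro q
    have happ : S q = ∑ j ∈ Finset.range (d * (M + 1)),
        ((1 - lam) * (lam ^ (j + 1))⁻¹) * e (a j) q := by
      rw [hS]
      rw [WithLp.ofLp_sum, Finset.sum_apply]
      rfl
    rw [happ, sum_range_mul_aux]
    have hterm : ∀ k, ∀ r < d,
        ((1 - lam) * (lam ^ (d * k + r + 1))⁻¹) * e (a (d * k + r)) q
          = if r = (q:ℕ) ∧ ¬(m q < k ∨ b q k = 0)
            then (1 - lam) * (lam ^ ((q:ℕ) + 1))⁻¹ * (lam ^ (d * k))⁻¹ else 0 := by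
      intro k r hr
      have hmod : (d * k + r) % d = r := by
        rw [Nat.mul_add_mod, Nat.mod_eq_of_lt hr]
      have hdiv : (d * k + r) / d = k := by
        rw [Nat.mul_add_div hdpos, Nat.div_eq_of_lt hr, Nat.add_zero]
      have hPj : P (d * k + r) = ⟨r, hr⟩ := by
        simp [hP, hmod]
      rw [he]
      by_cases hc : m (⟨r, hr⟩ : Fin d) < k ∨ b (⟨r, hr⟩ : Fin d) k = 0
      · have : a (d * k + r) = 0 := by
          rw [ha]; simp only [hPj, hdiv]; simp [hc]
        rw [this]
        by_cases hrq : r = (q:ℕ) ∧ ¬(m q < k ∨ b q k = 0)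
        · exfalso; obtain ⟨h1, h2⟩ := hrq
          apply h2
          have : (⟨r, hr⟩ : Fin d) = q := Fin.ext h1
          rwa [this] at hc
        · rw [if_neg hrq]
          simp
      · have : a (d * k + r) = (⟨r, hr⟩ : Fin d).succ := by
          rw [ha]; simp only [hPj, hdiv]; simp [hc]
        rw [this]
        by_cases hrq : r = (q:ℕ)
        · have hqe : (⟨r, hr⟩ : Fin d) = q := Fin.ext hrq
          rw [hqe] at hc
          rw [if_pos (by simp only [Fin.val_succ]; omega), if_pos ⟨hrq, hc⟩, hrq,
            show d * k + (q:ℕ) + 1 = ((q:ℕ)+1) + d * k by ring, pow_add, mul_inv]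
          ring
        · have : ¬((⟨r, hr⟩ : Fin d).succ : ℕ) = (q:ℕ) + 1 := by
            simp only [Fin.val_succ]; omega
          rw [if_neg this, if_neg (fun hcon => hrq hcon.1)]
          simp
    have step1 : ∀ k ∈ Finset.range (M+1), (∑ r ∈ Finset.range d,
        ((1 - lam) * (lam ^ (d * k + r + 1))⁻¹) * e (a (d * k + r)) q)
        = (if ¬(m q < k ∨ b q k = 0)
            then (1 - lam) * (lam ^ ((q:ℕ)+1))⁻¹ * (lam ^ (d*k))⁻¹ else 0) := by
      intro k _
      rw [Finset.sum_eq_single_of_mem (q:ℕ) (Finset.mem_range.2 q.2)]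
      · rw [hterm k q q.2]
        by_cases hc : m q < k ∨ b q k = 0 <;> simp [hc]
      · intro r hrmem hrne
        rw [hterm k r (Finset.mem_range.1 hrmem)]
        simp [hrne]
    have e1 : ∀ k ∈ Finset.range (m q + 1),
        (if ¬(m q < k ∨ b q k = 0)
            then (1 - lam) * (lam ^ ((q:ℕ)+1))⁻¹ * (lam ^ (d*k))⁻¹ else 0)
        = (1 - lam) * (lam ^ ((q:ℕ)+1))⁻¹ * ((b q k : ℝ) * (lam ^ (d*k))⁻¹) := by
      intro k hk
      have hk' : ¬ m q < k := by
        have := Finset.mem_range.1 hk; omega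
      rcases Nat.le_one_iff_eq_zero_or_eq_one.1 (hb q k) with h0 | h1
      · rw [if_neg (not_not_intro (Or.inr h0))]
        simp [h0]
      · rw [if_pos (by push_neg; exact ⟨by omega, by omega⟩), h1]
        push_cast; ring
    have hzero : ∀ k ∈ Finset.range (M + 1), k ∉ Finset.range (m q + 1) →
        (if ¬(m q < k ∨ b q k = 0)
            then (1 - lam) * (lam ^ ((q:ℕ)+1))⁻¹ * (lam ^ (d*k))⁻¹ else 0) = 0 := by
      intro k _ hk2
      rw [if_neg]
      push_neg
      simp only [Finset.mem_range] at hk2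
      omega
    have hsub : Finset.range (m q + 1) ⊆ Finset.range (M + 1) :=
      Finset.range_subset_range.2 (by have := hmM q; omega)
    rw [Finset.sum_congr rfl step1, ← Finset.sum_subset hsub hzero,
      Finset.sum_congr rfl e1, ← Finset.mul_sum]
  -- coordinatewise distance bound
  have hcoorddist : ∀ q : Fin d, |x q - S q| ≤ ε / Real.sqrt d := by
    intro q
    have h1 : x q - S q = (1 - lam) * (lam ^ ((q:ℕ)+1))⁻¹ *
        (x q * lam ^ ((q:ℕ)+1) * (1 - lam)⁻¹
          - ∑ k ∈ Finset.range (m q + 1), (b q k : ℝ) * (lam ^ (d*k))⁻¹) := by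
      rw [hScoord q]
      field_simp
    rw [h1, abs_mul, abs_of_pos (by positivity : (0:ℝ) < (1 - lam) * (lam ^ ((q:ℕ)+1))⁻¹)]
    have hle1 : lam ^ d * (lam ^ ((q:ℕ)+1))⁻¹ ≤ 1 := by
      rw [← div_eq_mul_inv, div_le_one (by positivity)]; exact hpowle q
    calc (1 - lam) * (lam ^ ((q:ℕ)+1))⁻¹ * |x q * lam ^ ((q:ℕ)+1) * (1 - lam)⁻¹
            - ∑ k ∈ Finset.range (m q + 1), (b q k : ℝ) * (lam ^ (d*k))⁻¹|
        ≤ (1 - lam) * (lam ^ ((q:ℕ)+1))⁻¹ * ε' :=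
          mul_le_mul_of_nonneg_left (hbound q) (by positivity)
      _ = ε / Real.sqrt d * (lam ^ d * (lam ^ ((q:ℕ)+1))⁻¹) := by
          rw [hε'def]; field_simp
      _ ≤ ε / Real.sqrt d := by
          nlinarith [div_pos hε hsd]
  rw [EuclideanSpace.dist_eq]
  have hsum : ∑ q : Fin d, dist (x q) (S q) ^ 2 ≤ ∑ _q : Fin d, (ε / Real.sqrt d)^2 := by
    refine Finset.sum_le_sum fun q _ => ?_
    rw [Real.dist_eq]
    exact pow_le_pow_left₀ (abs_nonneg _) (hcoorddist q) 2
  calc Real.sqrt (∑ q : Fin d, dist (x q) (S q) ^ 2)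
      ≤ Real.sqrt (∑ _q : Fin d, (ε / Real.sqrt d)^2) := Real.sqrt_le_sqrt hsum
    _ = ε := by
        rw [Finset.sum_const, Finset.card_univ, Fintype.card_fin, nsmul_eq_mul,
          div_pow, Real.sq_sqrt hd0.le,
          show (d:ℝ) * (ε^2 / d) = ε^2 by field_simp]
        exact Real.sqrt_sq hε.le
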